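/- Let n ≥ 1, let M = (m_{ij}) ∈ ℝ^{n×n} be doubly hyperdominant, and let f : ℝ → ℝ be monotone nondecreasing with σ · f(σ) ≥ 0 for all σ ∈ ℝ. Then for every y ∈ ℝ^n, Σ_{i=1}^{n} Σ_{j=1}^{n} m_{ij} f(y_i) y_j ≥ 0. -/
import Mathlib


noncomputable section

open Finset

namespace Stmt9Aux

/-- The "discrete derivative" of a sequence. -/
def dlt (A : ℕ → ℝ) (k : ℕ) : ℝ := A k - if k = 0 then 0 else A (k - 1)

lemma tele (A : ℕ → ℝ) (i : ℕ) : ∑ k ∈ range (i + 1), dlt A k = A i := by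
  induction i with
  | zero => simp [dlt]
  | succ m ih =>
    rw [Finset.sum_range_succ, ih]
    simp [dlt]

/-- Abel summation in indicator form. -/
lemma abel (n : ℕ) (A R : ℕ → ℝ) :
    ∑ i ∈ range n, A i * R i
      = ∑ k ∈ range n, dlt A k * ∑ i ∈ range n, (if k ≤ i then R i else 0) := by
  have h1 : ∀ i ∈ range n, A i * R i
      = ∑ k ∈ range n, (if k ≤ i then dlt A k * R i else 0) := by
    intro i hi
    have hi' : i < n := mem_range.mp hi
    have hfil : (range n).filter (fun k => k ≤ i) = range (i + 1) := by
      ext k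
      simp only [mem_filter, mem_range]
      omega
    rw [← Finset.sum_filter, hfil, ← Finset.sum_mul, tele]
  rw [Finset.sum_congr rfl h1, Finset.sum_comm]
  refine Finset.sum_congr rfl fun k _ => ?_
  rw [Finset.mul_sum]
  refine Finset.sum_congr rfl fun i _ => ?_
  split <;> simp

/-- Lower-right block sums of a doubly hyperdominant matrix are nonnegative:
row-sum version (valid when `l ≤ k`). -/
lemma rblk_row (n : ℕ) (N : ℕ → ℕ → ℝ)
    (hoff : ∀ i j, i < n → j < n → i ≠ j → N i j ≤ 0)
    (hrow : ∀ i, i < n → 0 ≤ ∑ j ∈ range n, N i j)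
    (k l : ℕ) (hlk : l ≤ k) :
    0 ≤ ∑ i ∈ range n, (if k ≤ i then (∑ j ∈ range n, if l ≤ j then N i j else 0) else 0) := by
  apply Finset.sum_nonneg
  intro i hi
  have hi' : i < n := mem_range.mp hi
  split
  · rename_i hki
    have hsum : ∑ j ∈ range n, (if l ≤ j then N i j else 0)
        = (∑ j ∈ range n, N i j) - ∑ j ∈ range n, (if j < l then N i j else 0) := by
      rw [← Finset.sum_sub_distrib]
      refine Finset.sum_congr rfl fun j _ => ?_
      by_cases h : l ≤ j
      · rw [if_pos h, if_neg (by omega)]; ring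
      · rw [if_neg h, if_pos (by omega)]; ring
    rw [hsum]
    have h2 : ∑ j ∈ range n, (if j < l then N i j else 0) ≤ 0 := by
      apply Finset.sum_nonpos
      intro j hj
      split
      · rename_i hjl
        exact hoff i j hi' (mem_range.mp hj) (by omega)
      · exact le_refl 0
    linarith [hrow i hi']
  · exact le_refl 0

/-- Lower-right block sums of a doubly hyperdominant matrix are nonnegative. -/
lemma rblk (n : ℕ) (N : ℕ → ℕ → ℝ)
    (hoff : ∀ i j, i < n → j < n → i ≠ j → N i j ≤ 0)
    (hrow : ∀ i, i < n → 0 ≤ ∑ j ∈ range n, N i j)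
    (hcol : ∀ j, j < n → 0 ≤ ∑ i ∈ range n, N i j)
    (k l : ℕ) :
    0 ≤ ∑ i ∈ range n, (if k ≤ i then (∑ j ∈ range n, if l ≤ j then N i j else 0) else 0) := by
  rcases le_total l k with h | h
  · exact rblk_row n N hoff hrow k l h
  · have hswap : ∑ i ∈ range n, (if k ≤ i then (∑ j ∈ range n, if l ≤ j then N i j else 0) else 0)
        = ∑ j ∈ range n, (if l ≤ j then (∑ i ∈ range n, if k ≤ i then N i j else 0) else 0) := by
      have h1 : ∀ i, (if k ≤ i then (∑ j ∈ range n, if l ≤ j then N i j else 0) else 0)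
          = ∑ j ∈ range n, (if l ≤ j then (if k ≤ i then N i j else 0) else 0) := by
        intro i
        by_cases hki : k ≤ i <;> simp [hki]
      rw [Finset.sum_congr rfl fun i _ => h1 i, Finset.sum_comm]
      refine Finset.sum_congr rfl fun j _ => ?_
      by_cases hlj : l ≤ j <;> simp [hlj]
    rw [hswap]
    exact rblk_row n (fun j i => N i j)
      (fun i j hi hj hij => hoff j i hj hi (Ne.symm hij)) hcol l k h

/-- The bilinear form is nonnegative on pairs of nonnegative nondecreasing vectors. -/
lemma P1 (n : ℕ) (M : ℕ → ℕ → ℝ)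
    (hoff : ∀ i j, i < n → j < n → i ≠ j → M i j ≤ 0)
    (hrow : ∀ i, i < n → 0 ≤ ∑ j ∈ range n, M i j)
    (hcol : ∀ j, j < n → 0 ≤ ∑ i ∈ range n, M i j)
    (A C : ℕ → ℝ) (hA0 : 0 ≤ A 0) (hAs : ∀ k, k + 1 < n → A k ≤ A (k + 1))
    (hC0 : 0 ≤ C 0) (hCs : ∀ k, k + 1 < n → C k ≤ C (k + 1)) :
    0 ≤ ∑ i ∈ range n, ∑ j ∈ range n, M i j * A i * C j := by
  have hdA : ∀ k, k < n → 0 ≤ dlt A k := by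
    intro k hk
    cases k with
    | zero => simpa [dlt] using hA0
    | succ m =>
      have := hAs m hk
      simp only [dlt, Nat.succ_ne_zero, if_false, Nat.add_sub_cancel]
      linarith
  have hdC : ∀ k, k < n → 0 ≤ dlt C k := by
    intro k hk
    cases k with
    | zero => simpa [dlt] using hC0
    | succ m =>
      have := hCs m hk
      simp only [dlt, Nat.succ_ne_zero, if_false, Nat.add_sub_cancel]
      linarith
  have step1 : ∑ i ∈ range n, ∑ j ∈ range n, M i j * A i * C j
      = ∑ i ∈ range n, A i * (∑ j ∈ range n, M i j * C j) := by
    refine Finset.sum_congr rfl fun i _ => ?_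
    rw [Finset.mul_sum]
    exact Finset.sum_congr rfl fun j _ => by ring
  rw [step1, abel]
  apply Finset.sum_nonneg
  intro k hk
  apply mul_nonneg (hdA k (mem_range.mp hk))
  have step2 : ∑ i ∈ range n, (if k ≤ i then ∑ j ∈ range n, M i j * C j else 0)
      = ∑ j ∈ range n, C j * (∑ i ∈ range n, if k ≤ i then M i j else 0) := by
    have h1 : ∀ i, (if k ≤ i then ∑ j ∈ range n, M i j * C j else 0)
        = ∑ j ∈ range n, (if k ≤ i then M i j else 0) * C j := by
      intro i
      by_cases h : k ≤ i <;> simp [h]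
    rw [Finset.sum_congr rfl fun i _ => h1 i, Finset.sum_comm]
    refine Finset.sum_congr rfl fun j _ => ?_
    rw [Finset.mul_sum]
    exact Finset.sum_congr rfl fun i _ => by ring
  rw [step2, abel n C (fun j => ∑ i ∈ range n, if k ≤ i then M i j else 0)]
  apply Finset.sum_nonneg
  intro l hl
  apply mul_nonneg (hdC l (mem_range.mp hl))
  exact rblk n (fun j i => M i j)
    (fun i j hi hj hij => hoff j i hj hi (Ne.symm hij)) hcol hrow l k

lemma max_sub_max_neg (t : ℝ) : t = max t 0 - max (-t) 0 := by
  rcases le_total t 0 with h | h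
  · rw [max_eq_right h, max_eq_left (neg_nonneg.mpr h)]; ring
  · rw [max_eq_left h, max_eq_right (neg_nonpos.mpr h)]; ring

/-- The key inequality, over ℕ-indexed data which is monotone on `range n`. -/
lemma keyNat (n : ℕ) (M : ℕ → ℕ → ℝ)
    (hoff : ∀ i j, i < n → j < n → i ≠ j → M i j ≤ 0)
    (hrow : ∀ i, i < n → 0 ≤ ∑ j ∈ range n, M i j)
    (hcol : ∀ j, j < n → 0 ≤ ∑ i ∈ range n, M i j)
    (x y : ℕ → ℝ)
    (hx : ∀ i j, i ≤ j → j < n → x i ≤ x j)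
    (hy : ∀ i j, i ≤ j → j < n → y i ≤ y j)
    (hxy : ∀ i, i < n → 0 ≤ x i * y i) :
    0 ≤ ∑ i ∈ range n, ∑ j ∈ range n, M i j * x i * y j := by
  rcases Nat.eq_zero_or_pos n with rfl | hn
  · simp
  set A : ℕ → ℝ := fun i => max (x i) 0 with hAdef
  set B : ℕ → ℝ := fun i => max (-(x i)) 0 with hBdef
  set C : ℕ → ℝ := fun j => max (y j) 0 with hCdef
  set D : ℕ → ℝ := fun j => max (-(y j)) 0 with hDdef
  have hAnn : ∀ i, 0 ≤ A i := fun i => le_max_right _ _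
  have hBnn : ∀ i, 0 ≤ B i := fun i => le_max_right _ _
  have hCnn : ∀ i, 0 ≤ C i := fun i => le_max_right _ _
  have hDnn : ∀ i, 0 ≤ D i := fun i => le_max_right _ _
  -- T1 : positive × positive part
  have hT1 : 0 ≤ ∑ i ∈ range n, ∑ j ∈ range n, M i j * A i * C j := by
    refine P1 n M hoff hrow hcol A C (hAnn 0) ?_ (hCnn 0) ?_
    · intro k hk
      exact max_le_max (hx k (k + 1) (Nat.le_succ k) hk) le_rfl
    · intro k hk
      exact max_le_max (hy k (k + 1) (Nat.le_succ k) hk) le_rfl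
  -- T4 : negative × negative part, by reflection
  have hT4 : 0 ≤ ∑ i ∈ range n, ∑ j ∈ range n, M i j * B i * D j := by
    have h4 := P1 n (fun i j => M (n - 1 - i) (n - 1 - j))
      (fun i j hi hj hij => hoff (n - 1 - i) (n - 1 - j) (by omega) (by omega) (by omega))
      (fun i hi => by
        have : ∑ j ∈ range n, M (n - 1 - i) (n - 1 - j) = ∑ j ∈ range n, M (n - 1 - i) j :=
          Finset.sum_range_reflect (fun j => M (n - 1 - i) j) n
        rw [this]
        exact hrow (n - 1 - i) (by omega))
      (fun j hj => by
        have : ∑ i ∈ range n, M (n - 1 - i) (n - 1 - j) = ∑ i ∈ range n, M i (n - 1 - j) :=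
          Finset.sum_range_reflect (fun i => M i (n - 1 - j)) n
        rw [this]
        exact hcol (n - 1 - j) (by omega))
      (fun i => B (n - 1 - i)) (fun j => D (n - 1 - j))
      (hBnn _)
      (fun k hk => by
        have hmono : x (n - 1 - (k + 1)) ≤ x (n - 1 - k) :=
          hx (n - 1 - (k + 1)) (n - 1 - k) (by omega) (by omega)
        exact max_le_max (neg_le_neg hmono) le_rfl)
      (hDnn _)
      (fun k hk => by
        have hmono : y (n - 1 - (k + 1)) ≤ y (n - 1 - k) :=
          hy (n - 1 - (k + 1)) (n - 1 - k) (by omega) (by omega)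
        exact max_le_max (neg_le_neg hmono) le_rfl)
    have heq : ∑ i ∈ range n, ∑ j ∈ range n,
          M (n - 1 - i) (n - 1 - j) * B (n - 1 - i) * D (n - 1 - j)
        = ∑ i ∈ range n, ∑ j ∈ range n, M i j * B i * D j := by
      rw [Finset.sum_range_reflect
        (fun i => ∑ j ∈ range n, M i (n - 1 - j) * B i * D (n - 1 - j)) n]
      exact Finset.sum_congr rfl fun i _ =>
        Finset.sum_range_reflect (fun j => M i j * B i * D j) n
    rw [← heq]
    exact h4
  -- T2 : cross term (positive × negative), each summand nonpositive
  have hT2 : ∑ i ∈ range n, ∑ j ∈ range n, M i j * A i * D j ≤ 0 := by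
    apply Finset.sum_nonpos
    intro i hi
    apply Finset.sum_nonpos
    intro j hj
    rcases (hAnn i).lt_or_eq with hA | hA
    · rcases (hDnn j).lt_or_eq with hD | hD
      · have hxi : 0 < x i := by
          by_contra h
          push_neg at h
          have : A i = 0 := max_eq_right h
          linarith
        have hyj : y j < 0 := by
          by_contra h
          push_neg at h
          have : D j = 0 := max_eq_right (by linarith)
          linarith
        have hyi : 0 ≤ y i := by
          by_contra h
          push_neg at h
          nlinarith [hxy i (mem_range.mp hi)]
        have hij : i ≠ j := by
          intro hij
          rw [hij] at hyi
          linarith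
        have hM := hoff i j (mem_range.mp hi) (mem_range.mp hj) hij
        calc M i j * A i * D j = M i j * (A i * D j) := by ring
          _ ≤ 0 := mul_nonpos_iff.mpr (Or.inr ⟨hM, mul_nonneg (hAnn i) (hDnn j)⟩)
      · rw [← hD, mul_zero]
    · rw [← hA, mul_zero, zero_mul]
  -- T3 : cross term (negative × positive), each summand nonpositive
  have hT3 : ∑ i ∈ range n, ∑ j ∈ range n, M i j * B i * C j ≤ 0 := by
    apply Finset.sum_nonpos
    intro i hi
    apply Finset.sum_nonpos
    intro j hj
    rcases (hBnn i).lt_or_eq with hB | hB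
    · rcases (hCnn j).lt_or_eq with hC | hC
      · have hxi : x i < 0 := by
          by_contra h
          push_neg at h
          have : B i = 0 := max_eq_right (by linarith)
          linarith
        have hyj : 0 < y j := by
          by_contra h
          push_neg at h
          have : C j = 0 := max_eq_right h
          linarith
        have hyi : y i ≤ 0 := by
          by_contra h
          push_neg at h
          nlinarith [hxy i (mem_range.mp hi)]
        have hij : i ≠ j := by
          intro hij
          rw [hij] at hyi
          linarith
        have hM := hoff i j (mem_range.mp hi) (mem_range.mp hj) hij
        calc M i j * B i * C j = M i j * (B i * C j) := by ring
          _ ≤ 0 := mul_nonpos_iff.mpr (Or.inr ⟨hM, mul_nonneg (hBnn i) (hCnn j)⟩)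
      · rw [← hC, mul_zero]
    · rw [← hB, mul_zero, zero_mul]
  -- assemble
  have hsplit : ∀ i j, M i j * x i * y j
      = M i j * A i * C j - M i j * A i * D j - M i j * B i * C j + M i j * B i * D j := by
    intro i j
    have hxeq : x i = A i - B i := max_sub_max_neg (x i)
    have hyeq : y j = C j - D j := max_sub_max_neg (y j)
    rw [hxeq, hyeq]
    ring
  have hexp : ∑ i ∈ range n, ∑ j ∈ range n, M i j * x i * y j
      = (∑ i ∈ range n, ∑ j ∈ range n, M i j * A i * C j)
        - (∑ i ∈ range n, ∑ j ∈ range n, M i j * A i * D j)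
        - (∑ i ∈ range n, ∑ j ∈ range n, M i j * B i * C j)
        + (∑ i ∈ range n, ∑ j ∈ range n, M i j * B i * D j) := by
    simp only [← Finset.sum_sub_distrib, ← Finset.sum_add_distrib]
    exact Finset.sum_congr rfl fun i _ => Finset.sum_congr rfl fun j _ => hsplit i j
  rw [hexp]
  linarith

end Stmt9Aux

/-- A square real matrix is doubly hyperdominant if its off-diagonal entries are
nonpositive and all row and column sums are nonnegative. -/
def DoublyHyperdominant {r : ℕ} (M : Matrix (Fin r) (Fin r) ℝ) : Prop :=
  (∀ i j, i ≠ j → M i j ≤ 0) ∧ (∀ i, 0 ≤ ∑ j, M i j) ∧ (∀ j, 0 ≤ ∑ i, M i j)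

theorem stmt_9 (n : ℕ) (hn : 1 ≤ n) (M : Matrix (Fin n) (Fin n) ℝ)
    (hM : DoublyHyperdominant M)
    (f : ℝ → ℝ) (hmono : Monotone f) (hsign : ∀ σ : ℝ, 0 ≤ σ * f σ)
    (y : Fin n → ℝ) :
    0 ≤ ∑ i, ∑ j, M i j * f (y i) * y j := by
  obtain ⟨hoff, hrow, hcol⟩ := hM
  set σ := Tuple.sort y with hσ
  have hysort : Monotone (y ∘ σ) := Tuple.monotone_sort y
  have hn' : 0 < n := hn
  set φ : ℕ → Fin n := fun i => ⟨min i (n - 1), by omega⟩ with hφ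
  have hφeq : ∀ i : Fin n, φ (i : ℕ) = i := by
    intro i
    have := i.isLt
    apply Fin.ext
    simp only [hφ]
    omega
  set Mn : ℕ → ℕ → ℝ := fun i j => M (σ (φ i)) (σ (φ j)) with hMn
  set xn : ℕ → ℝ := fun i => f (y (σ (φ i))) with hxn
  set yn : ℕ → ℝ := fun i => y (σ (φ i)) with hyn
  have e1 : ∑ i, ∑ j, M i j * f (y i) * y j
      = ∑ i, ∑ j, M (σ i) (σ j) * f (y (σ i)) * y (σ j) := by
    rw [← Equiv.sum_comp σ (fun i => ∑ j, M i j * f (y i) * y j)]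
    refine Finset.sum_congr rfl fun i _ => ?_
    exact (Equiv.sum_comp σ (fun j => M (σ i) j * f (y (σ i)) * y j)).symm
  have e2 : ∑ i : Fin n, ∑ j : Fin n, M (σ i) (σ j) * f (y (σ i)) * y (σ j)
      = ∑ i ∈ Finset.range n, ∑ j ∈ Finset.range n, Mn i j * xn i * yn j := by
    rw [← Fin.sum_univ_eq_sum_range (fun i => ∑ j ∈ Finset.range n, Mn i j * xn i * yn j) n]
    refine Finset.sum_congr rfl fun i _ => ?_
    rw [← Fin.sum_univ_eq_sum_range (fun j => Mn (i : ℕ) j * xn (i : ℕ) * yn j) n]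
    refine Finset.sum_congr rfl fun j _ => ?_
    simp only [hMn, hxn, hyn, hφeq]
  rw [e1, e2]
  apply Stmt9Aux.keyNat n Mn
  · intro i j hi hj hij
    apply hoff
    intro h
    apply hij
    have h2 := σ.injective h
    have h3 : (φ i : ℕ) = (φ j : ℕ) := congrArg Fin.val h2
    simp only [hφ] at h3
    omega
  · intro i hi
    have : ∑ j ∈ Finset.range n, Mn i j = ∑ j : Fin n, M (σ (φ i)) (σ j) := by
      rw [← Fin.sum_univ_eq_sum_range (fun j => Mn i j) n]
      refine Finset.sum_congr rfl fun j _ => ?_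
      simp only [hMn, hφeq]
    rw [this, Equiv.sum_comp σ (fun j => M (σ (φ i)) j)]
    exact hrow _
  · intro j hj
    have : ∑ i ∈ Finset.range n, Mn i j = ∑ i : Fin n, M (σ i) (σ (φ j)) := by
      rw [← Fin.sum_univ_eq_sum_range (fun i => Mn i j) n]
      refine Finset.sum_congr rfl fun i _ => ?_
      simp only [hMn, hφeq]
    rw [this, Equiv.sum_comp σ (fun i => M i (σ (φ j)))]
    exact hcol _
  · intro i j hij hj
    apply hmono
    have : φ i ≤ φ j := by
      simp only [hφ, Fin.mk_le_mk]
      omega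
    exact hysort this
  · intro i j hij hj
    have : φ i ≤ φ j := by
      simp only [hφ, Fin.mk_le_mk]
      omega
    exact hysort this
  · intro i hi
    rw [mul_comm]
    exact hsign _
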